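/- Let n ≥ 1, a ∈ [(n-2)/(n+2), 1), θ, γ, η ∈ ℝ. Define f on 𝔻 by z f'(z) = z/((1+ze^{i(η+γ)})(1+ze^{-i(η-γ)})), f(0)=0, and R by R(0)=0, R'(z) = f'(z)/(1+e^{i(θ-2γ)} z^n). Assume Re(1 + z f''(z)/f'(z)) > 0 on 𝔻. Then the function ŵ(z) = -e^{iθ} z^n [ ((n-(n+2)a)/(1-a) + zR''(z)/R'(z)) / (2/(1-a) + zR''(z)/R'(z)) ] satisfies |ŵ(z)| < 1 for all z ∈ 𝔻. -/

import Mathlib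

open Metric Complex in
theorem stmt_16 (n : ℕ) (hn : 1 ≤ n) (a : ℝ)
    (ha₁ : ((n : ℝ) - 2) / ((n : ℝ) + 2) ≤ a) (ha₂ : a < 1) (θ γ η : ℝ)
    (f f' f'' R' R'' : ℂ → ℂ)
    (hf0 : f 0 = 0)
    (hf' : ∀ z ∈ ball (0 : ℂ) 1, HasDerivAt f (f' z) z)
    (hf'eq : ∀ z ∈ ball (0 : ℂ) 1, z * f' z =
      z / ((1 + z * Complex.exp ((η + γ) * Complex.I)) *
        (1 + z * Complex.exp (-(η - γ) * Complex.I))))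
    (hf'' : ∀ z ∈ ball (0 : ℂ) 1, HasDerivAt f' (f'' z) z)
    (hf'ne : ∀ z ∈ ball (0 : ℂ) 1, f' z ≠ 0)
    (hR' : ∀ z ∈ ball (0 : ℂ) 1,
      R' z = f' z / (1 + Complex.exp ((θ - 2 * γ) * Complex.I) * z ^ n))
    (hR'' : ∀ z ∈ ball (0 : ℂ) 1, HasDerivAt R' (R'' z) z)
    (hre : ∀ z ∈ ball (0 : ℂ) 1, (1 + z * f'' z / f' z).re > 0) :
    ∀ z ∈ ball (0 : ℂ) 1,
      ‖-(Complex.exp (θ * Complex.I)) * z ^ n *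
        (((((n : ℂ) - ((n : ℂ) + 2) * (a : ℂ)) / (1 - (a : ℂ))) + z * R'' z / R' z) /
          ((2 / (1 - (a : ℂ))) + z * R'' z / R' z))‖ < 1 := by
  obtain ⟨m, rfl⟩ : ∃ m, n = m + 1 := ⟨n - 1, (Nat.succ_pred_eq_of_pos hn).symm⟩
  intro z hz
  have hz1 : ‖z‖ < 1 := by
    simpa [Complex.dist_eq] using hz
  set w : ℂ := Complex.exp ((θ - 2 * γ) * Complex.I) with hw_def
  have hw : ‖w‖ = 1 := by
    simp [hw_def, Complex.norm_exp]
  set u : ℂ := w * z ^ (m + 1) with hu_def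
  have hu : ‖u‖ < 1 := by
    rw [hu_def, norm_mul, hw, one_mul, norm_pow]
    exact pow_lt_one₀ (norm_nonneg z) hz1 (Nat.succ_ne_zero m)
  have hD : (1 : ℂ) + u ≠ 0 := by
    intro h
    have : u = -1 := by linear_combination h
    rw [this] at hu; simp at hu
  have hf'z : f' z ≠ 0 := hf'ne z hz
  have hR'z : R' z ≠ 0 := by
    rw [hR' z hz]
    exact div_ne_zero hf'z hD
  -- derivative of R'
  have hpow : HasDerivAt (fun y : ℂ => 1 + w * y ^ (m + 1))
      (w * ((m + 1) * z ^ m)) z := by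
    simpa using ((hasDerivAt_pow (m + 1) z).const_mul w).const_add 1
  have hg : HasDerivAt (fun y : ℂ => f' y / (1 + w * y ^ (m + 1)))
      ((f'' z * (1 + u) - f' z * (w * ((m + 1) * z ^ m))) / (1 + u) ^ 2) z :=
    (hf'' z hz).div hpow hD
  have heq : R' =ᶠ[nhds z] fun y : ℂ => f' y / (1 + w * y ^ (m + 1)) :=
    Filter.eventuallyEq_of_mem (isOpen_ball.mem_nhds hz) (fun y hy => hR' y hy)
  have hR''eq : R'' z =
      (f'' z * (1 + u) - f' z * (w * ((m + 1) * z ^ m))) / (1 + u) ^ 2 :=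
    (hR'' z hz).unique (hg.congr_of_eventuallyEq heq)
  set q : ℂ := z * f'' z / f' z with hq_def
  have hp : z * R'' z / R' z = q - ((m + 1 : ℕ) : ℂ) * (u / (1 + u)) := by
    rw [hR''eq, hR' z hz, hq_def, hu_def]
    have hD' : (1 : ℂ) + w * z ^ (m + 1) ≠ 0 := hD
    field_simp
    push_cast
    ring
  set c : ℝ := (((m : ℝ) + 1) - 2 - (((m : ℝ) + 1) + 2) * a) / (1 - a) with hc_def
  have ha' : (0 : ℝ) < 1 - a := by linarith
  have hc : c ≤ 0 := by
    have h1 : ((m : ℝ) + 1) - 2 ≤ (((m : ℝ) + 1) + 2) * a := by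
      have hpos : (0 : ℝ) < ((m + 1 : ℕ) : ℝ) + 2 := by positivity
      have := (div_le_iff₀ hpos).mp ha₁
      push_cast at this ⊢
      linarith
    exact div_nonpos_of_nonpos_of_nonneg (by linarith) (by linarith)
  set s : ℂ := 2 * (1 + q) + ((m + 1 : ℕ) : ℂ) * ((1 - u) / (1 + u)) with hs_def
  have haC : (1 : ℂ) - (a : ℂ) ≠ 0 := by
    intro h
    have : ((1 - a : ℝ) : ℂ) = 0 := by push_cast; linear_combination h
    exact ha'.ne' (by exact_mod_cast this)
  -- key algebraic identities
  have hA : (((m + 1 : ℕ) : ℂ) - ((m + 1 : ℕ) + 2) * (a : ℂ)) / (1 - (a : ℂ)) +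
      z * R'' z / R' z = (s + (c : ℂ)) / 2 := by
    rw [hp, hs_def, hc_def]
    push_cast
    field_simp
    ring
  have hB : 2 / (1 - (a : ℂ)) + z * R'' z / R' z = (s - (c : ℂ)) / 2 := by
    rw [hp, hs_def, hc_def]
    push_cast
    field_simp
    ring
  -- real part of s is positive
  have hfrac : (0 : ℝ) < (((1 : ℂ) - u) / (1 + u)).re := by
    have hN : 0 < Complex.normSq (1 + u) := Complex.normSq_pos.mpr hD
    have hnum : Complex.normSq u < 1 := by
      rw [Complex.normSq_eq_norm_sq]
      nlinarith [norm_nonneg u]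
    have heq2 : (((1 : ℂ) - u) / (1 + u)).re =
        (1 - Complex.normSq u) / Complex.normSq (1 + u) := by
      rw [Complex.div_re, ← add_div]
      congr 1
      simp [Complex.normSq_apply]
      ring
    rw [heq2]
    exact div_pos (by linarith) hN
  have hs : 0 < s.re := by
    have h1 : (1 + q).re > 0 := hre z hz
    have h2 : s.re = 2 * (1 + q).re + ((m + 1 : ℕ) : ℝ) * (((1 - u) / (1 + u)).re) := by
      rw [hs_def]
      simp [Complex.add_re, Complex.mul_re]
    rw [h2]
    have : (0 : ℝ) < ((m + 1 : ℕ) : ℝ) := by positivity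
    nlinarith
  -- core inequality
  have hne : s - (c : ℂ) ≠ 0 := by
    intro h
    have : (s - (c : ℂ)).re = 0 := by rw [h]; simp
    simp [Complex.sub_re, Complex.ofReal_re] at this
    linarith
  have habs : ‖s + (c : ℂ)‖ ≤ ‖s - (c : ℂ)‖ := by
    rw [Complex.norm_def, Complex.norm_def]
    apply Real.sqrt_le_sqrt
    simp [Complex.normSq_apply, Complex.add_re, Complex.add_im, Complex.sub_re,
      Complex.sub_im]
    nlinarith
  have hratio : ‖(s + (c : ℂ)) / 2 / ((s - (c : ℂ)) / 2)‖ ≤ 1 := by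
    have h2 : (s + (c : ℂ)) / 2 / ((s - (c : ℂ)) / 2) = (s + (c : ℂ)) / (s - (c : ℂ)) := by
      field_simp
    rw [h2, norm_div, div_le_one (norm_pos_iff.mpr hne)]
    exact habs
  have hzn : ‖z ^ (m + 1)‖ < 1 := by
    rw [norm_pow]
    exact pow_lt_one₀ (norm_nonneg z) hz1 (Nat.succ_ne_zero m)
  have hE : ‖-(Complex.exp (θ * Complex.I))‖ = 1 := by
    simp [Complex.norm_exp]
  calc ‖-(Complex.exp (θ * Complex.I)) * z ^ (m + 1) *
        (((((m + 1 : ℕ) : ℂ) - ((m + 1 : ℕ) + 2) * (a : ℂ)) / (1 - (a : ℂ)) +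
          z * R'' z / R' z) /
          (2 / (1 - (a : ℂ)) + z * R'' z / R' z))‖
      = ‖-(Complex.exp (θ * Complex.I))‖ * ‖z ^ (m + 1)‖ *
        ‖(s + (c : ℂ)) / 2 / ((s - (c : ℂ)) / 2)‖ := by
        rw [norm_mul, norm_mul, hA, hB]
    _ < 1 := by
        rw [hE, one_mul]
        nlinarith [norm_nonneg (z ^ (m + 1)),
          norm_nonneg ((s + (c : ℂ)) / 2 / ((s - (c : ℂ)) / 2))]
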